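/- Fix ω > 0, D ≥ 0, T > 0 with T·D possibly zero but (T, D) ≠ (0, 0) and T > 0. Let A be the 4×4 matrix A = [[-1/2, 0, -ω², 0],[0, -1/2, 0, -ω²],[1,0,0,0],[0,1,0,0]] and B the 4×2 matrix with columns b_1 = (√T, 0, 0, -D)ᵀ and b_2 = (0, √T, D, 0)ᵀ. Then the smallest A-invariant subspace of ℝ⁴ containing the column space of B equals ℝ⁴. -/

import Mathlib

/-- Kalman controllability for one Fourier mode of the Lefevere–Schenkel
chain: the smallest A-invariant subspace of ℝ⁴ containing the two columns of B is ℝ⁴. -/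
theorem stmt6 (ω T D : ℝ) (hω : 0 < ω) (hT : 0 < T) (hD : 0 ≤ D)
    (A : Matrix (Fin 4) (Fin 4) ℝ)
    (hA : A = !![-1/2, 0, -ω^2, 0; 0, -1/2, 0, -ω^2; 1, 0, 0, 0; 0, 1, 0, 0])
    (b₁ b₂ : Fin 4 → ℝ)
    (hb₁ : b₁ = ![Real.sqrt T, 0, 0, -D])
    (hb₂ : b₂ = ![0, Real.sqrt T, D, 0])
    (S : Submodule ℝ (Fin 4 → ℝ))
    (hinv : ∀ x ∈ S, A.mulVec x ∈ S)
    (h1 : b₁ ∈ S) (h2 : b₂ ∈ S) :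
    S = ⊤ := by
  set s := Real.sqrt T with hsdef
  have hs : s ≠ 0 := ne_of_gt (Real.sqrt_pos.mpr hT)
  -- the matrix whose rows are b₁, A b₁, b₂, A b₂
  set M : Matrix (Fin 4) (Fin 4) ℝ :=
    Matrix.of ![b₁, A.mulVec b₁, b₂, A.mulVec b₂] with hM
  have hrows : ∀ i : Fin 4, M i ∈ S := by
    intro i
    fin_cases i
    · exact h1
    · exact hinv _ h1
    · exact h2
    · exact hinv _ h2
  -- the determinant is nonzero
  have hdetval : M.det = -((s^2 - ω^2*D^2)^2 + (s*D/2)^2) := by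
    have e1 : A.mulVec b₁ = ![-s/2, ω^2*D, s, 0] := by
      funext i
      fin_cases i <;>
        simp [hA, hb₁, Matrix.mulVec, dotProduct, Fin.sum_univ_four] <;> ring
    have e2 : A.mulVec b₂ = ![-(ω^2*D), -s/2, 0, s] := by
      funext i
      fin_cases i <;>
        simp [hA, hb₂, Matrix.mulVec, dotProduct, Fin.sum_univ_four] <;> ring
    have hcast : (Fin.castSucc 2 : Fin 4) = 2 := rfl
    have hsa : (Fin.succAbove 3 2 : Fin 4) = 2 := rfl
    rw [hM, e1, e2, hb₁, hb₂]
    simp [Matrix.det_succ_row_zero, Fin.sum_univ_succ, hcast, hsa]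
    ring
  have hdet : M.det ≠ 0 := by
    rw [hdetval]
    rcases eq_or_lt_of_le hD with hD0 | hD0
    · rw [← hD0]
      intro h
      apply hs
      have h4 : s ^ 4 = 0 := by nlinarith
      exact pow_eq_zero_iff (by norm_num) |>.mp h4
    · intro h
      have h1' : (0:ℝ) < (s*D/2)^2 := by positivity
      nlinarith [sq_nonneg (s^2 - ω^2*D^2)]
  have hMinv : M⁻¹ * M = 1 := Matrix.nonsing_inv_mul M (isUnit_iff_ne_zero.mpr hdet)
  -- every vector is a combination of the rows of M
  rw [eq_top_iff]
  intro x _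
  have hxeq : x = Matrix.vecMul (Matrix.vecMul x M⁻¹) M := by
    rw [Matrix.vecMul_vecMul, hMinv, Matrix.vecMul_one]
  have hsum : ∀ c : Fin 4 → ℝ, Matrix.vecMul c M = ∑ i : Fin 4, c i • M i := by
    intro c
    funext j
    simp [Matrix.vecMul, dotProduct, Finset.sum_apply]
  rw [hxeq, hsum]
  exact S.sum_mem fun i _ => S.smul_mem _ (hrows i)
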